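/- Let H be a separable complex Hilbert space, let a be a bounded, hermitian, elliptic sesquilinear form on H, let C : H → H be a compact linear operator, and let b(u,v) := a(u,v) + ⟨C u, v⟩ be well-posed. Let (X_ℓ)_{ℓ∈ℕ} be a sequence of closed subspaces of H that is dense in the sense that for every ψ ∈ H the distance dist(ψ, X_ℓ) → 0 as ℓ → ∞. Then there exist an index ℓ• ∈ ℕ and a constant β > 0 such that every closed subspace X of H with X_{ℓ•} ⊆ X satisfies the discrete inf-sup condition β ≤ β_X, i.e., for every Φ ∈ X with Φ ≠ 0 one has β·‖Φ‖ ≤ sup over Ψ ∈ X with Ψ ≠ 0 of |b(Φ,Ψ)|/‖Ψ‖. -/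

import Mathlib

open scoped InnerProductSpace ComplexConjugate

open Filter

private lemma statement1_exists_rep {H : Type*} [NormedAddCommGroup H] [InnerProductSpace ℂ H]
    [CompleteSpace H]
    (a : H → H → ℂ)
    (ha_add₁ : ∀ u v w : H, a (u + v) w = a u w + a v w)
    (ha_smul₁ : ∀ (c : ℂ) (u v : H), a (c • u) v = c * a u v)
    (ha_add₂ : ∀ u v w : H, a u (v + w) = a u v + a u w)
    (ha_smul₂ : ∀ (c : ℂ) (u v : H), a u (c • v) = conj c * a u v)
    (M : ℝ) (hM : 0 < M) (ha_bdd : ∀ u v : H, ‖a u v‖ ≤ M * ‖u‖ * ‖v‖) :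
    ∃ A : H →L[ℂ] H, ∀ u v : H, ⟪A u, v⟫_ℂ = a v u := by
  have key : ∀ u : H, ∃ Au : H, ∀ v : H, ⟪Au, v⟫_ℂ = a v u := by
    intro u
    let f : H →ₗ[ℂ] ℂ :=
      { toFun := fun v => a v u
        map_add' := fun v w => ha_add₁ v w u
        map_smul' := fun c v => ha_smul₁ c v u }
    have hf : ∀ v : H, ‖f v‖ ≤ (M * ‖u‖) * ‖v‖ := by
      intro v
      calc ‖a v u‖ ≤ M * ‖v‖ * ‖u‖ := ha_bdd v u
        _ = (M * ‖u‖) * ‖v‖ := by ring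
    refine ⟨(InnerProductSpace.toDual ℂ H).symm (f.mkContinuous (M * ‖u‖) hf), fun v => ?_⟩
    exact InnerProductSpace.toDual_symm_apply
  choose A' hA' using key
  have hadd : ∀ u w : H, A' (u + w) = A' u + A' w := by
    intro u w
    refine ext_inner_right ℂ fun v => ?_
    rw [hA', inner_add_left, hA', hA', ha_add₂]
  have hsmul : ∀ (c : ℂ) (u : H), A' (c • u) = c • A' u := by
    intro c u
    refine ext_inner_right ℂ fun v => ?_
    rw [hA', inner_smul_left, hA', ha_smul₂]
  have hbound : ∀ u : H, ‖A' u‖ ≤ M * ‖u‖ := by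
    intro u
    have h2 : ‖A' u‖ ^ 2 = ‖a (A' u) u‖ := by
      rw [← hA' u (A' u), inner_self_eq_norm_sq_to_K]
      simp
    have h3 : ‖a (A' u) u‖ ≤ M * ‖A' u‖ * ‖u‖ := ha_bdd _ _
    rcases eq_or_lt_of_le (norm_nonneg (A' u)) with h0 | h0
    · rw [← h0]; positivity
    · have h4 : ‖A' u‖ * ‖A' u‖ ≤ (M * ‖u‖) * ‖A' u‖ := by
        rw [← pow_two]; rw [h2]; calc ‖a (A' u) u‖ ≤ M * ‖A' u‖ * ‖u‖ := h3
          _ = (M * ‖u‖) * ‖A' u‖ := by ring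
      exact le_of_mul_le_mul_right h4 h0
  exact ⟨LinearMap.mkContinuous
    { toFun := A', map_add' := hadd, map_smul' := hsmul } M hbound, fun u v => hA' u v⟩

private lemma statement1_surj {H : Type*} [NormedAddCommGroup H] [InnerProductSpace ℂ H]
    [CompleteSpace H] (A : H →L[ℂ] H) (α : ℝ) (hα : 0 < α)
    (hlow : ∀ u : H, α * ‖u‖ ≤ ‖A u‖)
    (horth : ∀ v : H, (∀ u : H, ⟪A u, v⟫_ℂ = 0) → v = 0) :
    Function.Surjective A := by
  have hanti : AntilipschitzWith ⟨α⁻¹, by positivity⟩ A := by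
    refine A.antilipschitz_of_bound fun x => ?_
    have h1 := hlow x
    calc ‖x‖ = α⁻¹ * (α * ‖x‖) := by field_simp
      _ ≤ α⁻¹ * ‖A x‖ := by
        exact mul_le_mul_of_nonneg_left h1 (by positivity)
      _ = (⟨α⁻¹, by positivity⟩ : NNReal) * ‖A x‖ := rfl
  have hclosed : IsClosed (Set.range A) := hanti.isClosed_range A.uniformContinuous
  have hclosed' : IsClosed ((LinearMap.range (A : H →ₗ[ℂ] H) : Submodule ℂ H) : Set H) := by
    rwa [LinearMap.coe_range]
  haveI : CompleteSpace (LinearMap.range (A : H →ₗ[ℂ] H) : Submodule ℂ H) := hclosed'.completeSpace_coe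
  have hbot : (LinearMap.range (A : H →ₗ[ℂ] H) : Submodule ℂ H)ᗮ = ⊥ := by
    rw [Submodule.eq_bot_iff]
    intro v hv
    rw [Submodule.mem_orthogonal] at hv
    exact horth v fun u => hv (A u) (LinearMap.mem_range_self _ u)
  have htop : (LinearMap.range (A : H →ₗ[ℂ] H) : Submodule ℂ H) = ⊤ := Submodule.orthogonal_eq_bot_iff.mp hbot
  exact LinearMap.range_eq_top.mp htop

/-- Uniform discrete inf-sup stability of the compactly perturbed
elliptic form `b(u,v) = a(u,v) + ⟨C u, v⟩` on a separable complex Hilbert space: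
if the closed subspaces `X ℓ` approximate every element of `H` (the distances
tend to zero), then there exist an index `ℓ•` and `β > 0` such that every closed
subspace containing `X ℓ•` satisfies the discrete inf-sup condition with
constant `β`. -/

theorem statement1
    {H : Type*} [NormedAddCommGroup H] [InnerProductSpace ℂ H] [CompleteSpace H]
    [TopologicalSpace.SeparableSpace H]
    (a : H → H → ℂ)
    (ha_add₁ : ∀ u v w : H, a (u + v) w = a u w + a v w)
    (ha_smul₁ : ∀ (c : ℂ) (u v : H), a (c • u) v = c * a u v)
    (ha_add₂ : ∀ u v w : H, a u (v + w) = a u v + a u w)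
    (ha_smul₂ : ∀ (c : ℂ) (u v : H), a u (c • v) = conj c * a u v)
    (M : ℝ) (hM : 0 < M) (ha_bdd : ∀ u v : H, ‖a u v‖ ≤ M * ‖u‖ * ‖v‖)
    (ha_herm : ∀ u v : H, a u v = conj (a v u))
    (α : ℝ) (hα : 0 < α) (ha_ell : ∀ u : H, α * ‖u‖ ^ 2 ≤ (a u u).re)
    (C : H →L[ℂ] H) (hC : IsCompactOperator C)
    (b : H → H → ℂ) (hb : ∀ u v : H, b u v = a u v + ⟪v, C u⟫_ℂ)
    (hwp : ∀ φ : H, (∀ ψ : H, b φ ψ = 0) → φ = 0)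
    (X : ℕ → Submodule ℂ H) (hXc : ∀ ℓ, IsClosed (X ℓ : Set H))
    (hdense : ∀ ψ : H,
      Filter.Tendsto (fun ℓ => Metric.infDist ψ (X ℓ : Set H)) Filter.atTop (nhds 0)) :
    ∃ (ℓs : ℕ) (β : ℝ), 0 < β ∧
      ∀ Y : Submodule ℂ H, IsClosed (Y : Set H) → X ℓs ≤ Y →
        ∀ Φ : H, Φ ∈ Y → Φ ≠ 0 →
          β * ‖Φ‖ ≤ ⨆ Ψ : {Ψ : H // Ψ ∈ Y ∧ Ψ ≠ 0}, ‖b Φ Ψ.1‖ / ‖Ψ.1‖ := by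
  classical
  haveI hcomp : ∀ ℓ, CompleteSpace (X ℓ) := fun ℓ => (hXc ℓ).completeSpace_coe
  obtain ⟨A, hA⟩ := statement1_exists_rep a ha_add₁ ha_smul₁ ha_add₂ ha_smul₂ M hM ha_bdd
  set T : H →L[ℂ] H := A + C with hT
  have hbT : ∀ u v : H, b u v = ⟪v, T u⟫_ℂ := by
    intro u v
    have h1 : ⟪v, A u⟫_ℂ = a u v := by
      rw [← inner_conj_symm, hA, ← ha_herm]
    rw [hb, show T u = A u + C u from rfl, inner_add_right, h1]
  have hTa : ∀ u : H, A u = T u - C u := by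
    intro u
    show A u = (A + C) u - C u
    simp
  -- A is bounded below
  have hAlow : ∀ u : H, α * ‖u‖ ≤ ‖A u‖ := by
    intro u
    rcases eq_or_ne u 0 with rfl | hu
    · simp
    have h1 : α * ‖u‖ ^ 2 ≤ (a u u).re := ha_ell u
    have h2 : (a u u).re ≤ ‖a u u‖ := by
      exact Complex.re_le_norm _
    have h3 : ‖a u u‖ ≤ ‖A u‖ * ‖u‖ := by
      rw [← hA u u]; exact norm_inner_le_norm _ _
    have hun : (0:ℝ) < ‖u‖ := norm_pos_iff.mpr hu
    nlinarith [h1, h2, h3, hun]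
  -- A is surjective
  have hsurj : Function.Surjective A := by
    refine statement1_surj A α hα hAlow ?_
    intro v hv
    have h1 : (a v v).re = 0 := by rw [← hA v v, hv v]; simp
    have h2 := ha_ell v
    rcases eq_or_lt_of_le (norm_nonneg v) with h0 | h0
    · exact norm_eq_zero.mp h0.symm
    · exfalso
      nlinarith [h1, h2, mul_pos hα (mul_pos h0 h0)]
  -- projections converge pointwise
  have hPdist : ∀ (ℓ : ℕ) (ψ : H),
      ‖ψ - ((X ℓ).orthogonalProjectionOnto ψ : H)‖ = Metric.infDist ψ (X ℓ : Set H) := by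
    intro ℓ ψ
    rw [Metric.infDist_eq_iInf, ← Submodule.starProjection_apply, Submodule.starProjection_minimal]
    simp_rw [dist_eq_norm]
    rfl
  have hPt : ∀ ψ : H,
      Tendsto (fun ℓ => ‖ψ - ((X ℓ).orthogonalProjectionOnto ψ : H)‖) atTop (nhds 0) := by
    intro ψ
    simp_rw [hPdist]
    exact hdense ψ
  -- key claim
  have key : ∃ (ℓs : ℕ) (β : ℝ), 0 < β ∧ ∀ Φ : H,
      β * (‖Φ‖ * ‖Φ‖) ≤ ‖Φ‖ * ‖((X ℓs).orthogonalProjectionOnto (T Φ) : H)‖ + ‖⟪Φ, T Φ⟫_ℂ‖ := by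
    by_contra hcon
    push_neg at hcon
    have hsel : ∀ ℓ : ℕ, ∃ u : H, ‖u‖ = 1 ∧
        ‖((X ℓ).orthogonalProjectionOnto (T u) : H)‖ < 1 / (ℓ + 1) ∧
        ‖⟪u, T u⟫_ℂ‖ < 1 / (ℓ + 1) := by
      intro ℓ
      obtain ⟨Φ, hΦ⟩ := hcon ℓ (1 / (ℓ + 1)) (by positivity)
      have hΦ0 : Φ ≠ 0 := by
        rintro rfl
        simp at hΦ
      have hn : (0:ℝ) < ‖Φ‖ := norm_pos_iff.mpr hΦ0
      have hip : (0:ℝ) ≤ ‖⟪Φ, T Φ⟫_ℂ‖ := norm_nonneg _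
      have hpp : (0:ℝ) ≤ ‖((X ℓ).orthogonalProjectionOnto (T Φ) : H)‖ := norm_nonneg _
      refine ⟨((‖Φ‖ : ℂ))⁻¹ • Φ, ?_, ?_, ?_⟩
      · rw [norm_smul]
        simp [hn.ne']
      · have e1 : ((X ℓ).orthogonalProjectionOnto (T (((‖Φ‖ : ℂ))⁻¹ • Φ)) : H)
            = ((‖Φ‖ : ℂ))⁻¹ • ((X ℓ).orthogonalProjectionOnto (T Φ) : H) := by
          rw [map_smul, map_smul]
          rfl
        rw [e1, norm_smul]
        have e2 : ‖((‖Φ‖ : ℂ))⁻¹‖ = ‖Φ‖⁻¹ := by simp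
        rw [e2, inv_mul_eq_div, div_lt_iff₀ hn]
        nlinarith [hΦ]
      · have e1 : ⟪((‖Φ‖ : ℂ))⁻¹ • Φ, T (((‖Φ‖ : ℂ))⁻¹ • Φ)⟫_ℂ
            = conj (((‖Φ‖ : ℂ))⁻¹) * (((‖Φ‖ : ℂ))⁻¹ * ⟪Φ, T Φ⟫_ℂ) := by
          rw [map_smul, inner_smul_left, inner_smul_right]
        rw [e1]
        have e2 : ‖conj (((‖Φ‖ : ℂ))⁻¹) * (((‖Φ‖ : ℂ))⁻¹ * ⟪Φ, T Φ⟫_ℂ)‖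
            = ‖Φ‖⁻¹ * (‖Φ‖⁻¹ * ‖⟪Φ, T Φ⟫_ℂ‖) := by
          simp [norm_mul]
        rw [e2]
        have e3 : ‖Φ‖⁻¹ * (‖Φ‖⁻¹ * ‖⟪Φ, T Φ⟫_ℂ‖) = ‖⟪Φ, T Φ⟫_ℂ‖ / (‖Φ‖ * ‖Φ‖) := by
          field_simp
        rw [e3, div_lt_iff₀ (by positivity)]
        nlinarith [hΦ]
    choose u hu1 hu2 hu3 using hsel
    have hε : Tendsto (fun ℓ : ℕ => 1 / ((ℓ : ℝ) + 1)) atTop (nhds 0) :=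
      tendsto_one_div_add_atTop_nhds_zero_nat
    have h1 : Tendsto (fun ℓ => ‖((X ℓ).orthogonalProjectionOnto (T (u ℓ)) : H)‖) atTop (nhds 0) :=
      squeeze_zero (fun ℓ => norm_nonneg _) (fun ℓ => (hu2 ℓ).le) hε
    have h2 : Tendsto (fun ℓ => ‖⟪u ℓ, T (u ℓ)⟫_ℂ‖) atTop (nhds 0) :=
      squeeze_zero (fun ℓ => norm_nonneg _) (fun ℓ => (hu3 ℓ).le) hε
    have h3 : ∀ ψ : H, Tendsto (fun ℓ => ‖⟪ψ, T (u ℓ)⟫_ℂ‖) atTop (nhds 0) := by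
      intro ψ
      have hbnd : ∀ ℓ, ‖⟪ψ, T (u ℓ)⟫_ℂ‖ ≤
          ‖ψ - ((X ℓ).orthogonalProjectionOnto ψ : H)‖ * ‖T‖
            + ‖ψ‖ * ‖((X ℓ).orthogonalProjectionOnto (T (u ℓ)) : H)‖ := by
        intro ℓ
        have hsplit : ⟪ψ, T (u ℓ)⟫_ℂ =
            ⟪ψ - ((X ℓ).orthogonalProjectionOnto ψ : H), T (u ℓ)⟫_ℂ
              + ⟪ψ, ((X ℓ).orthogonalProjectionOnto (T (u ℓ)) : H)⟫_ℂ := by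
          simp only [Submodule.coe_orthogonalProjectionOnto_apply]
          rw [← Submodule.inner_starProjection_left_eq_right, inner_sub_left]
          ring
        have hTu : ‖T (u ℓ)‖ ≤ ‖T‖ := by
          calc ‖T (u ℓ)‖ ≤ ‖T‖ * ‖u ℓ‖ := T.le_opNorm _
            _ = ‖T‖ := by rw [hu1 ℓ, mul_one]
        calc ‖⟪ψ, T (u ℓ)⟫_ℂ‖
            ≤ ‖⟪ψ - ((X ℓ).orthogonalProjectionOnto ψ : H), T (u ℓ)⟫_ℂ‖
              + ‖⟪ψ, ((X ℓ).orthogonalProjectionOnto (T (u ℓ)) : H)⟫_ℂ‖ := by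
              rw [hsplit]; exact norm_add_le _ _
          _ ≤ ‖ψ - ((X ℓ).orthogonalProjectionOnto ψ : H)‖ * ‖T (u ℓ)‖
              + ‖ψ‖ * ‖((X ℓ).orthogonalProjectionOnto (T (u ℓ)) : H)‖ :=
              add_le_add (norm_inner_le_norm _ _) (norm_inner_le_norm _ _)
          _ ≤ ‖ψ - ((X ℓ).orthogonalProjectionOnto ψ : H)‖ * ‖T‖
              + ‖ψ‖ * ‖((X ℓ).orthogonalProjectionOnto (T (u ℓ)) : H)‖ := by
              have := mul_le_mul_of_nonneg_left hTu (norm_nonneg (ψ - ((X ℓ).orthogonalProjectionOnto ψ : H)))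
              linarith
      have hlim : Tendsto (fun ℓ =>
          ‖ψ - ((X ℓ).orthogonalProjectionOnto ψ : H)‖ * ‖T‖
            + ‖ψ‖ * ‖((X ℓ).orthogonalProjectionOnto (T (u ℓ)) : H)‖) atTop (nhds 0) := by
        have := ((hPt ψ).mul_const ‖T‖).add (h1.const_mul ‖ψ‖)
        simpa using this
      exact squeeze_zero (fun ℓ => norm_nonneg _) hbnd hlim
    -- compactness of C : extract convergent subsequence of C (u ℓ)
    have hC' : IsCompactOperator (C.toLinearMap) := hC
    have hcpt : IsCompact (closure (C.toLinearMap '' Metric.closedBall (0:H) 1)) :=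
      hC'.isCompact_closure_image_of_bounded Metric.isBounded_closedBall
    have hball : ∀ ℓ, C (u ℓ) ∈ closure (C.toLinearMap '' Metric.closedBall (0:H) 1) := by
      intro ℓ
      refine subset_closure ⟨u ℓ, ?_, rfl⟩
      simp [Metric.mem_closedBall, dist_eq_norm, hu1 ℓ]
    obtain ⟨w, -, g, hg, hwlim⟩ := hcpt.tendsto_subseq hball
    obtain ⟨φ, hφ⟩ := hsurj (-w)
    have hgat : Tendsto g atTop atTop := hg.tendsto_atTop
    have h2g : Tendsto (fun k => ‖⟪u (g k), T (u (g k))⟫_ℂ‖) atTop (nhds 0) := h2.comp hgat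
    have h3g : ∀ ψ : H, Tendsto (fun k => ‖⟪ψ, T (u (g k))⟫_ℂ‖) atTop (nhds 0) :=
      fun ψ => (h3 ψ).comp hgat
    have hCg : Tendsto (fun k => ‖C (u (g k)) - w‖) atTop (nhds 0) := by
      have := tendsto_iff_norm_sub_tendsto_zero.mp hwlim
      exact this
    -- strong convergence via ellipticity
    have hx : ∀ k, α * ‖u (g k) - φ‖ ^ 2 ≤
        ‖⟪u (g k), T (u (g k))⟫_ℂ‖ + ‖⟪φ, T (u (g k))⟫_ℂ‖
          + ‖C (u (g k)) - w‖ * (1 + ‖φ‖) := by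
      intro k
      set z := u (g k) with hz
      have e1 : α * ‖z - φ‖ ^ 2 ≤ (a (z - φ) (z - φ)).re := ha_ell _
      have e2 : a (z - φ) (z - φ) = ⟪A (z - φ), z - φ⟫_ℂ := (hA _ _).symm
      have e3 : A (z - φ) = T z - (C z - w) := by
        rw [map_sub, hφ, hTa z]
        abel
      have e4 : ⟪A (z - φ), z - φ⟫_ℂ
          = ⟪T z, z⟫_ℂ - ⟪T z, φ⟫_ℂ - ⟪C z - w, z - φ⟫_ℂ := by
        rw [e3, inner_sub_left, inner_sub_right]
      have e5 : (a (z - φ) (z - φ)).re ≤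
          ‖⟪T z, z⟫_ℂ‖ + ‖⟪T z, φ⟫_ℂ‖ + ‖⟪C z - w, z - φ⟫_ℂ‖ := by
        rw [e2, e4]
        calc (⟪T z, z⟫_ℂ - ⟪T z, φ⟫_ℂ - ⟪C z - w, z - φ⟫_ℂ).re
            ≤ ‖⟪T z, z⟫_ℂ - ⟪T z, φ⟫_ℂ - ⟪C z - w, z - φ⟫_ℂ‖ := by
              exact Complex.re_le_norm _
          _ ≤ ‖⟪T z, z⟫_ℂ - ⟪T z, φ⟫_ℂ‖ + ‖⟪C z - w, z - φ⟫_ℂ‖ := norm_sub_le _ _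
          _ ≤ ‖⟪T z, z⟫_ℂ‖ + ‖⟪T z, φ⟫_ℂ‖ + ‖⟪C z - w, z - φ⟫_ℂ‖ := by
              have := norm_sub_le (⟪T z, z⟫_ℂ) (⟪T z, φ⟫_ℂ)
              linarith
      have e6 : ‖⟪T z, z⟫_ℂ‖ = ‖⟪z, T z⟫_ℂ‖ := norm_inner_symm _ _
      have e7 : ‖⟪T z, φ⟫_ℂ‖ = ‖⟪φ, T z⟫_ℂ‖ := norm_inner_symm _ _
      have e8 : ‖⟪C z - w, z - φ⟫_ℂ‖ ≤ ‖C z - w‖ * (1 + ‖φ‖) := by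
        calc ‖⟪C z - w, z - φ⟫_ℂ‖ ≤ ‖C z - w‖ * ‖z - φ‖ := norm_inner_le_norm _ _
          _ ≤ ‖C z - w‖ * (1 + ‖φ‖) := by
            refine mul_le_mul_of_nonneg_left ?_ (norm_nonneg _)
            calc ‖z - φ‖ ≤ ‖z‖ + ‖φ‖ := norm_sub_le _ _
              _ = 1 + ‖φ‖ := by rw [hu1 (g k)]
      calc α * ‖z - φ‖ ^ 2 ≤ (a (z - φ) (z - φ)).re := e1
        _ ≤ ‖⟪T z, z⟫_ℂ‖ + ‖⟪T z, φ⟫_ℂ‖ + ‖⟪C z - w, z - φ⟫_ℂ‖ := e5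
        _ ≤ ‖⟪z, T z⟫_ℂ‖ + ‖⟪φ, T z⟫_ℂ‖ + ‖C z - w‖ * (1 + ‖φ‖) := by
            rw [e6, e7]
            linarith [e8]
    have hsq : Tendsto (fun k => α * ‖u (g k) - φ‖ ^ 2) atTop (nhds 0) := by
      have hrhs : Tendsto (fun k =>
          ‖⟪u (g k), T (u (g k))⟫_ℂ‖ + ‖⟪φ, T (u (g k))⟫_ℂ‖
            + ‖C (u (g k)) - w‖ * (1 + ‖φ‖)) atTop (nhds 0) := by
        have := (h2g.add (h3g φ)).add (hCg.mul_const (1 + ‖φ‖))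
        simpa using this
      exact squeeze_zero (fun k => by positivity) hx hrhs
    have hsq2 : Tendsto (fun k => ‖u (g k) - φ‖ ^ 2) atTop (nhds 0) := by
      have := hsq.const_mul α⁻¹
      simpa [hα.ne', ← mul_assoc] using this
    have hxlim : Tendsto (fun k => ‖u (g k) - φ‖) atTop (nhds 0) := by
      have := (Real.continuous_sqrt.tendsto 0).comp hsq2
      simpa [Function.comp_def, Real.sqrt_sq, norm_nonneg] using this
    have hulim : Tendsto (fun k => u (g k)) atTop (nhds φ) :=
      tendsto_iff_norm_sub_tendsto_zero.mpr hxlim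
    have hφ1 : ‖φ‖ = 1 := by
      have hn : Tendsto (fun k => ‖u (g k)‖) atTop (nhds ‖φ‖) := hulim.norm
      have hc : Tendsto (fun k : ℕ => (1:ℝ)) atTop (nhds 1) := tendsto_const_nhds
      have : Tendsto (fun k => ‖u (g k)‖) atTop (nhds 1) := by
        simpa [hu1] using hc
      exact tendsto_nhds_unique hn this
    have hTφ : T φ = 0 := by
      have hψ : ∀ ψ : H, ⟪ψ, T φ⟫_ℂ = 0 := by
        intro ψ
        have l1 : Tendsto (fun k => ⟪ψ, T (u (g k))⟫_ℂ) atTop (nhds ⟪ψ, T φ⟫_ℂ) := by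
          have hTcont : Tendsto (fun k => T (u (g k))) atTop (nhds (T φ)) :=
            (T.continuous.tendsto φ).comp hulim
          exact (tendsto_const_nhds.inner hTcont)
        have l2 : Tendsto (fun k => ⟪ψ, T (u (g k))⟫_ℂ) atTop (nhds 0) := by
          rw [tendsto_zero_iff_norm_tendsto_zero]
          exact h3g ψ
        exact tendsto_nhds_unique l1 l2
      have := hψ (T φ)
      rwa [inner_self_eq_zero] at this
    have hφ0 : φ = 0 := by
      refine hwp φ fun ψ => ?_
      rw [hbT, hTφ, inner_zero_right]
    rw [hφ0, norm_zero] at hφ1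
    norm_num at hφ1
  -- assemble
  obtain ⟨ℓs, β, hβ, hkey⟩ := key
  refine ⟨ℓs, β / 2, by positivity, ?_⟩
  intro Y hYc hXY Φ hΦY hΦ0
  have hΦn : (0:ℝ) < ‖Φ‖ := norm_pos_iff.mpr hΦ0
  set S := ⨆ Ψ : {Ψ : H // Ψ ∈ Y ∧ Ψ ≠ 0}, ‖b Φ Ψ.1‖ / ‖Ψ.1‖ with hS
  have hBdd : BddAbove (Set.range fun Ψ : {Ψ : H // Ψ ∈ Y ∧ Ψ ≠ 0} => ‖b Φ Ψ.1‖ / ‖Ψ.1‖) := by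
    refine ⟨‖T Φ‖, ?_⟩
    rintro x ⟨Ψ, rfl⟩
    have hΨn : (0:ℝ) < ‖Ψ.1‖ := norm_pos_iff.mpr Ψ.2.2
    rw [div_le_iff₀ hΨn, hbT]
    calc ‖⟪Ψ.1, T Φ⟫_ℂ‖ ≤ ‖Ψ.1‖ * ‖T Φ‖ := norm_inner_le_norm _ _
      _ = ‖T Φ‖ * ‖Ψ.1‖ := mul_comm _ _
  have hmem1 : ‖b Φ Φ‖ / ‖Φ‖ ≤ S := le_ciSup hBdd ⟨Φ, hΦY, hΦ0⟩
  have hS0 : (0:ℝ) ≤ S := le_trans (by positivity) hmem1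
  have hi : ‖⟪Φ, T Φ⟫_ℂ‖ ≤ S * ‖Φ‖ := by
    have h' : ‖b Φ Φ‖ ≤ S * ‖Φ‖ := (div_le_iff₀ hΦn).mp hmem1
    rwa [hbT] at h'
  have hp : ‖((X ℓs).orthogonalProjectionOnto (T Φ) : H)‖ ≤ S := by
    by_cases hz : ((X ℓs).orthogonalProjectionOnto (T Φ) : H) = 0
    · rw [hz, norm_zero]; exact hS0
    · set q : H := ((X ℓs).orthogonalProjectionOnto (T Φ) : H) with hq
      have hqY : q ∈ Y := hXY (SetLike.coe_mem _)
      have hqn : (0:ℝ) < ‖q‖ := norm_pos_iff.mpr hz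
      have hinner : ⟪q, T Φ⟫_ℂ = ((‖q‖ : ℂ)) ^ 2 := by
        have horth : ⟪T Φ - q, q⟫_ℂ = 0 :=
            Submodule.starProjection_inner_eq_zero (K := X ℓs) (T Φ) q (SetLike.coe_mem _)
        have h' : ⟪q, T Φ - q⟫_ℂ = 0 := by
          rw [← inner_conj_symm, horth, map_zero]
        rw [inner_sub_right] at h'
        have : ⟪q, T Φ⟫_ℂ = ⟪q, q⟫_ℂ := sub_eq_zero.mp h'
        rw [this, inner_self_eq_norm_sq_to_K]
        norm_cast
      have hval : ‖b Φ q‖ / ‖q‖ = ‖q‖ := by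
        rw [hbT, hinner]
        have : ‖((‖q‖ : ℂ)) ^ 2‖ = ‖q‖ ^ 2 := by simp
        rw [this, sq, mul_div_assoc, div_self hqn.ne', mul_one]
      calc ‖q‖ = ‖b Φ q‖ / ‖q‖ := hval.symm
        _ ≤ S := le_ciSup hBdd ⟨q, hqY, hz⟩
  have hfin := hkey Φ
  have h2S : β * (‖Φ‖ * ‖Φ‖) ≤ 2 * (S * ‖Φ‖) := by
    nlinarith [hfin, hp, hi, hΦn.le]
  have hmul : (β / 2 * ‖Φ‖) * ‖Φ‖ ≤ S * ‖Φ‖ := by nlinarith [h2S]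
  exact le_of_mul_le_mul_right hmul hΦn
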